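/- arXiv:1302.6659 — 2 statements merged into one kernel-verified Lean document; each statement's English description precedes it below -/
import Mathlib

section
/- Let α ∈ (0,1). Suppose u : {0,…,n} → [0,1] satisfies u(n) = 1 and F_{u(y)}(y) = α/2 for every y with 0 ≤ y ≤ n−1, and suppose ℓ : {0,…,n} → [0,1] satisfies ℓ(0) = 0 and 1 − F_{ℓ(y)}(y−1) = α/2 for every y with 1 ≤ y ≤ n. Then for every θ ∈ [0,1], Σ_{y : u(y) < θ} f_θ(y) ≤ α/2 and Σ_{y : ℓ(y) > θ} f_θ(y) ≤ α/2; that is, the Clopper–Pearson interval [ℓ(Y), u(Y)] satisfies P_θ(θ > u(Y)) ≤ α/2 and P_θ(θ < ℓ(Y)) ≤ α/2 for all θ. -/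
/-- The Binomial(n, θ) probability mass function `f_θ(y) = C(n,y) θ^y (1-θ)^(n-y)`. -/
noncomputable def binomP (n : ℕ) (θ : ℝ) (y : ℕ) : ℝ :=
  (n.choose y : ℝ) * θ ^ y * (1 - θ) ^ (n - y)

/-- `F_θ(y-1) = ∑_{j=0}^{y-1} f_θ(j)`, with the convention `F_θ(-1) = 0`. -/
noncomputable def binomCDFpred (n : ℕ) (θ : ℝ) (y : ℕ) : ℝ :=
  ∑ j ∈ Finset.range y, binomP n θ j

/-- The Binomial(n, θ) cumulative distribution function `F_θ(y) = ∑_{j=0}^{y} f_θ(j)`. -/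
noncomputable def binomCDF (n : ℕ) (θ : ℝ) (y : ℕ) : ℝ :=
  ∑ j ∈ Finset.range (y + 1), binomP n θ j

lemma binomP_nonneg {n : ℕ} {θ : ℝ} (h0 : 0 ≤ θ) (h1 : θ ≤ 1) (y : ℕ) :
    0 ≤ binomP n θ y := by
  unfold binomP
  exact mul_nonneg (mul_nonneg (Nat.cast_nonneg _) (pow_nonneg h0 y))
    (pow_nonneg (by linarith) _)

lemma binomP_sum_eq_one (n : ℕ) (θ : ℝ) :
    ∑ y ∈ Finset.range (n + 1), binomP n θ y = 1 := by
  have h := add_pow θ (1 - θ) n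
  rw [show θ + (1 - θ) = 1 by ring, one_pow] at h
  rw [h]
  apply Finset.sum_congr rfl
  intro j _
  unfold binomP
  ring

lemma hasDerivAt_binomP (n j : ℕ) (θ : ℝ) :
    HasDerivAt (fun t => binomP n t j)
      ((n.choose j : ℝ) * ((j : ℝ) * θ ^ (j - 1)) * (1 - θ) ^ (n - j)
        - (n.choose j : ℝ) * θ ^ j * (((n - j : ℕ) : ℝ) * (1 - θ) ^ (n - j - 1))) θ := by
  have hsub : HasDerivAt (fun t : ℝ => 1 - t) (-1) θ := by
    simpa using (hasDerivAt_id θ).const_sub (1 : ℝ)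
  have h2 : HasDerivAt (fun t : ℝ => (1 - t) ^ (n - j))
      ((((n - j : ℕ) : ℝ) * (1 - θ) ^ (n - j - 1)) * (-1)) θ :=
    (hasDerivAt_pow (n - j) (1 - θ)).comp θ hsub
  have h1 : HasDerivAt (fun t : ℝ => t ^ j) ((j : ℝ) * θ ^ (j - 1)) θ := hasDerivAt_pow j θ
  have h3 := (h1.mul h2).const_mul (n.choose j : ℝ)
  have heq : (fun t => binomP n t j)
      = fun t : ℝ => (n.choose j : ℝ) * (t ^ j * (1 - t) ^ (n - j)) := by
    funext t; unfold binomP; ring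
  rw [heq]
  refine h3.congr_deriv ?_
  ring

lemma hasDerivAt_binomCDF (n : ℕ) : ∀ y : ℕ, y < n → ∀ θ : ℝ,
    HasDerivAt (fun t => binomCDF n t y)
      (-((n : ℝ) * ((n - 1).choose y : ℝ) * θ ^ y * (1 - θ) ^ (n - 1 - y))) θ := by
  intro y
  induction y with
  | zero =>
    intro hy θ
    have heq : (fun t : ℝ => binomCDF n t 0) = fun t => binomP n t 0 := by
      funext t; simp [binomCDF]
    rw [heq]
    convert hasDerivAt_binomP n 0 θ using 1
    simp
  | succ y ih =>
    intro hy θ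
    have hy' : y < n := Nat.lt_of_succ_lt hy
    have heq : (fun t : ℝ => binomCDF n t (y + 1))
        = fun t => binomCDF n t y + binomP n t (y + 1) := by
      funext t; simp [binomCDF, Finset.sum_range_succ]
    rw [heq]
    have h := (ih hy' θ).add (hasDerivAt_binomP n (y + 1) θ)
    refine h.congr_deriv (Eq.symm ?_)
    obtain ⟨m, rfl⟩ : ∃ m, n = m + 1 := ⟨n - 1, by omega⟩
    obtain ⟨d, rfl⟩ : ∃ d, m = y + 1 + d := ⟨m - (y + 1), by omega⟩
    have hc1 : (((y + 1 + d) + 1).choose (y + 1) : ℝ) * (((y + 1 : ℕ)) : ℝ)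
        = (((y + 1 + d) + 1 : ℕ) : ℝ) * ((y + 1 + d).choose y : ℝ) := by
      have h' : ((y + 1 + d) + 1).choose (y + 1) * (y + 1)
          = ((y + 1 + d) + 1) * (y + 1 + d).choose y :=
        (Nat.add_one_mul_choose_eq (y + 1 + d) y).symm
      exact_mod_cast h'
    have hc2 : (((y + 1 + d) + 1).choose (y + 1) : ℝ) * ((d + 1 : ℕ) : ℝ)
        = (((y + 1 + d) + 1 : ℕ) : ℝ) * ((y + 1 + d).choose (y + 1) : ℝ) := by
      have h' : ((y + 1 + d) + 1).choose (y + 1) * (((y + 1 + d) + 1) - (y + 1))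
          = ((y + 1 + d) + 1) * (y + 1 + d).choose (y + 1) := by
        rw [← Nat.choose_succ_right_eq ((y + 1 + d) + 1) (y + 1)]
        exact (Nat.add_one_mul_choose_eq (y + 1 + d) (y + 1)).symm
      rw [show ((y + 1 + d) + 1) - (y + 1) = d + 1 by omega] at h'
      exact_mod_cast h'
    simp only [show y + 1 + d + 1 - (y + 1) - 1 = d from by omega,
      show y + 1 + d + 1 - (y + 1) = d + 1 from by omega,
      show y + 1 + d + 1 - 1 = y + 1 + d from by omega,
      show y + 1 - 1 = y from by omega,
      show y + 1 + d - y = d + 1 from by omega,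
      show y + 1 + d - (y + 1) = d from by omega]
    push_cast at hc1 hc2 ⊢
    linear_combination (-(θ ^ y * (1 - θ) ^ (d + 1))) * hc1
      + (θ ^ (y + 1) * (1 - θ) ^ d) * hc2

lemma binomCDF_anti {n y : ℕ} (hy : y < n) :
    AntitoneOn (fun θ : ℝ => binomCDF n θ y) (Set.Icc 0 1) := by
  apply antitoneOn_of_deriv_nonpos (convex_Icc 0 1)
  · intro x _
    exact (hasDerivAt_binomCDF n y hy x).differentiableAt.continuousAt.continuousWithinAt
  · intro x _
    exact (hasDerivAt_binomCDF n y hy x).differentiableAt.differentiableWithinAt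
  · intro x hx
    rw [interior_Icc] at hx
    rw [(hasDerivAt_binomCDF n y hy x).deriv]
    apply neg_nonpos.mpr
    apply mul_nonneg
    apply mul_nonneg
    apply mul_nonneg (Nat.cast_nonneg _) (Nat.cast_nonneg _)
    · exact pow_nonneg hx.1.le y
    · exact pow_nonneg (by linarith [hx.2]) _

/-- The Clopper–Pearson `1-α` interval `[ℓ(Y), u(Y)]`, defined by `u(n) = 1`,
`F_{u(y)}(y) = α/2` for `y ≤ n-1`, `ℓ(0) = 0` and `1 - F_{ℓ(y)}(y-1) = α/2` for `1 ≤ y ≤ n`,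
satisfies `P_θ(θ > u(Y)) ≤ α/2` and `P_θ(θ < ℓ(Y)) ≤ α/2` for every `θ ∈ [0,1]`. -/
theorem stmt_5 (n : ℕ) (hn : 1 ≤ n) (α : ℝ) (hα : α ∈ Set.Ioo (0 : ℝ) 1)
    (u l : ℕ → ℝ)
    (hu01 : ∀ y ≤ n, u y ∈ Set.Icc (0 : ℝ) 1)
    (hl01 : ∀ y ≤ n, l y ∈ Set.Icc (0 : ℝ) 1)
    (hun : u n = 1)
    (hu : ∀ y ≤ n - 1, binomCDF n (u y) y = α / 2)
    (hl0 : l 0 = 0)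
    (hl : ∀ y, 1 ≤ y → y ≤ n → 1 - binomCDFpred n (l y) y = α / 2)
    (θ : ℝ) (hθ : θ ∈ Set.Icc (0 : ℝ) 1) :
    (∑ y ∈ (Finset.range (n + 1)).filter (fun y => u y < θ), binomP n θ y) ≤ α / 2 ∧
    (∑ y ∈ (Finset.range (n + 1)).filter (fun y => θ < l y), binomP n θ y) ≤ α / 2 := by
  obtain ⟨hθ0, hθ1⟩ := hθ
  obtain ⟨hα0, hα1⟩ := hα
  constructor
  · rcases Finset.eq_empty_or_nonempty ((Finset.range (n + 1)).filter (fun y => u y < θ))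
      with hSe | hSne
    · rw [hSe, Finset.sum_empty]; linarith
    · set k := Finset.max' _ hSne with hkdef
      have hkmem := Finset.max'_mem _ hSne
      rw [← hkdef] at hkmem
      rw [Finset.mem_filter, Finset.mem_range] at hkmem
      obtain ⟨hkn, hku⟩ := hkmem
      have hkn' : k < n := by
        rcases Nat.lt_or_ge k n with h | h
        · exact h
        · exfalso
          have hkeq : k = n := by omega
          rw [hkeq, hun] at hku
          linarith
      have hsub : (Finset.range (n + 1)).filter (fun y => u y < θ) ⊆ Finset.range (k + 1) := by
        intro y hy
        have := Finset.le_max' _ y hy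
        rw [Finset.mem_range]
        omega
      calc ∑ y ∈ (Finset.range (n + 1)).filter (fun y => u y < θ), binomP n θ y
          ≤ ∑ y ∈ Finset.range (k + 1), binomP n θ y :=
            Finset.sum_le_sum_of_subset_of_nonneg hsub
              (fun i _ _ => binomP_nonneg hθ0 hθ1 i)
        _ = binomCDF n θ k := rfl
        _ ≤ binomCDF n (u k) k :=
            binomCDF_anti hkn' (hu01 k (by omega)) ⟨hθ0, hθ1⟩ hku.le
        _ = α / 2 := hu k (by omega)
  · rcases Finset.eq_empty_or_nonempty ((Finset.range (n + 1)).filter (fun y => θ < l y))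
      with hTe | hTne
    · rw [hTe, Finset.sum_empty]; linarith
    · set k := Finset.min' _ hTne with hkdef
      have hkmem := Finset.min'_mem _ hTne
      rw [← hkdef] at hkmem
      rw [Finset.mem_filter, Finset.mem_range] at hkmem
      obtain ⟨hkn, hkl⟩ := hkmem
      have hk1 : 1 ≤ k := by
        by_contra h
        have hkeq : k = 0 := by omega
        rw [hkeq, hl0] at hkl
        linarith
      have hkn' : k ≤ n := by omega
      have hsub : (Finset.range (n + 1)).filter (fun y => θ < l y)
          ⊆ Finset.range (n + 1) \ Finset.range k := by
        intro y hy
        have hmin := Finset.min'_le _ y hy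
        rw [Finset.mem_filter, Finset.mem_range] at hy
        rw [Finset.mem_sdiff, Finset.mem_range, Finset.mem_range]
        omega
      have h1 : ∑ y ∈ Finset.range (n + 1) \ Finset.range k, binomP n θ y
          = 1 - binomCDF n θ (k - 1) := by
        rw [Finset.sum_sdiff_eq_sub (Finset.range_subset_range.mpr (by omega)),
          binomP_sum_eq_one]
        unfold binomCDF
        rw [show k - 1 + 1 = k by omega]
      calc ∑ y ∈ (Finset.range (n + 1)).filter (fun y => θ < l y), binomP n θ y
          ≤ ∑ y ∈ Finset.range (n + 1) \ Finset.range k, binomP n θ y :=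
            Finset.sum_le_sum_of_subset_of_nonneg hsub
              (fun i _ _ => binomP_nonneg hθ0 hθ1 i)
        _ = 1 - binomCDF n θ (k - 1) := h1
        _ ≤ 1 - binomCDF n (l k) (k - 1) := by
            have := binomCDF_anti (show k - 1 < n by omega) ⟨hθ0, hθ1⟩
              (hl01 k hkn') hkl.le
            linarith
        _ = 1 - binomCDFpred n (l k) k := by
            unfold binomCDF binomCDFpred
            rw [show k - 1 + 1 = k by omega]
        _ = α / 2 := hl k hk1 hkn'
end

section
/- Let y be an integer with 0 ≤ y ≤ n, let 0 ≤ v₁ < v₂ ≤ 1, and let c ∈ (0,1). If θ₁, θ₂ ∈ (0,1) satisfy (1−v₁)(1 − F_{θ₁}(y−1)) + v₁(1 − F_{θ₁}(y)) = c and (1−v₂)(1 − F_{θ₂}(y−1)) + v₂(1 − F_{θ₂}(y)) = c, then θ₁ < θ₂. (The lower endpoint ℓ_R(y,v) of the randomized confidence interval is strictly increasing in v.) -/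
/-- Auxiliary: `g_j(θ) = n · C(n-1, j-1) · θ^(j-1) (1-θ)^(n-j)` (the negative of the
derivative of `θ ↦ F_θ(j-1)`), with `g_0 = 0`. -/
noncomputable def binomG (n j : ℕ) (θ : ℝ) : ℝ :=
  if j = 0 then 0 else
    (n : ℝ) * ((n-1).choose (j-1) : ℝ) * θ ^ (j-1) * (1-θ) ^ (n-j)

lemma choose_id1 (n j : ℕ) (hn : 1 ≤ n) (hj : 1 ≤ j) :
    (j : ℝ) * (n.choose j : ℝ) = (n : ℝ) * ((n-1).choose (j-1) : ℝ) := by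
  obtain ⟨m, rfl⟩ := Nat.exists_eq_add_of_le hn
  obtain ⟨k, rfl⟩ := Nat.exists_eq_add_of_le hj
  have h : (1+k) * ((1+m).choose (1+k)) = (1+m) * (m.choose k) := by
    have := Nat.add_one_mul_choose_eq m k
    rw [Nat.add_comm 1 k, Nat.add_comm 1 m, mul_comm]
    exact this.symm
  have h2 : (1+m) - 1 = m := by omega
  have h3 : (1+k) - 1 = k := by omega
  rw [h2, h3]
  exact_mod_cast h

lemma choose_id2 (n j : ℕ) (hn : 1 ≤ n) (hjn : j ≤ n) :
    ((n - j : ℕ) : ℝ) * (n.choose j : ℝ) = (n : ℝ) * ((n-1).choose j : ℝ) := by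
  rcases Nat.eq_zero_or_pos j with rfl | hj
  · simp
  rcases eq_or_lt_of_le hjn with h | hlt
  · subst h
    simp [Nat.choose_eq_zero_of_lt (by omega : j - 1 < j)]
  · have h1 : n.choose j = n.choose (n - j) := (Nat.choose_symm hjn).symm
    have h2 := choose_id1 n (n - j) hn (by omega)
    rw [h1]
    have h3 : (n - 1).choose (n - j - 1) = (n-1).choose j := by
      rw [← Nat.choose_symm (by omega : j ≤ n - 1)]
      congr 1; omega
    rw [← h3]; exact h2

lemma hasDerivAt_one_sub_pow (m : ℕ) (θ : ℝ) :
    HasDerivAt (fun x : ℝ => (1 - x) ^ m) (-((m : ℝ) * (1 - θ) ^ (m - 1))) θ := by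
  have h1 : HasDerivAt (fun x : ℝ => 1 - x) (-1) θ := by
    simpa using (hasDerivAt_id θ).const_sub 1
  have := (hasDerivAt_pow m (1 - θ)).comp θ h1
  simpa [mul_comm, Function.comp_def] using this

lemma hasDerivAt_binomP_s11 (n : ℕ) (hn : 1 ≤ n) (j : ℕ) (hj : j ≤ n) (θ : ℝ) :
    HasDerivAt (fun x => binomP n x j) (binomG n j θ - binomG n (j+1) θ) θ := by
  set C : ℝ := (n.choose j : ℝ) with hC
  have hu : HasDerivAt (fun x : ℝ => C * x ^ j) (C * ((j : ℝ) * θ ^ (j-1))) θ :=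
    (hasDerivAt_pow j θ).const_mul C
  have hv := hasDerivAt_one_sub_pow (n - j) θ
  have hprod := hu.mul hv
  have e1 : C * ((j : ℝ) * θ ^ (j-1)) * (1-θ) ^ (n-j) = binomG n j θ := by
    rcases Nat.eq_zero_or_pos j with rfl | hj1
    · simp [binomG]
    · simp only [binomG, if_neg (by omega : j ≠ 0)]
      have h := choose_id1 n j hn hj1
      calc C * ((j : ℝ) * θ ^ (j-1)) * (1-θ) ^ (n-j)
          = ((j : ℝ) * C) * θ ^ (j-1) * (1-θ) ^ (n-j) := by ring
        _ = _ := by rw [hC, h]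
  have e2 : C * θ ^ j * (((n - j : ℕ) : ℝ) * (1-θ) ^ (n-j-1)) = binomG n (j+1) θ := by
    simp only [binomG, if_neg (by omega : j + 1 ≠ 0), Nat.add_sub_cancel]
    have h := choose_id2 n j hn hj
    have hnn : n - (j+1) = n - j - 1 := by omega
    rw [hnn]
    calc C * θ ^ j * (((n - j : ℕ) : ℝ) * (1-θ) ^ (n-j-1))
        = (((n - j : ℕ) : ℝ) * C) * θ ^ j * (1-θ) ^ (n-j-1) := by ring
      _ = _ := by rw [hC, h]
  have heq : binomG n j θ - binomG n (j+1) θ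
      = C * ((j : ℝ) * θ ^ (j-1)) * (1-θ) ^ (n-j)
        + (C * θ ^ j) * (-(((n - j : ℕ) : ℝ) * (1-θ) ^ (n-j-1))) := by
    rw [← e1, ← e2]; ring
  rw [heq]
  exact hprod

lemma hasDerivAt_binomCDFpred (n : ℕ) (hn : 1 ≤ n) (y : ℕ) (hy : y ≤ n) (θ : ℝ) :
    HasDerivAt (fun x => binomCDFpred n x y) (-(binomG n y θ)) θ := by
  have h : HasDerivAt (fun x => ∑ j ∈ Finset.range y, binomP n x j)
      (∑ j ∈ Finset.range y, (binomG n j θ - binomG n (j+1) θ)) θ :=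
    HasDerivAt.fun_sum fun j hj =>
      hasDerivAt_binomP_s11 n hn j (le_trans (le_of_lt (Finset.mem_range.mp hj)) hy) θ
  rw [Finset.sum_range_sub'] at h
  simpa [binomCDFpred, binomG] using h

lemma binomG_nonneg (n j : ℕ) {θ : ℝ} (h0 : 0 ≤ θ) (h1 : θ ≤ 1) :
    0 ≤ binomG n j θ := by
  unfold binomG
  split
  · exact le_rfl
  · have h2 : (0:ℝ) ≤ 1 - θ := by linarith
    exact mul_nonneg (mul_nonneg (mul_nonneg (by positivity) (by positivity))
      (pow_nonneg h0 _)) (pow_nonneg h2 _)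

/-- For `0 ≤ y ≤ n`, `0 ≤ v₁ < v₂ ≤ 1`, `c ∈ (0,1)`: if `θ₁, θ₂ ∈ (0,1)` satisfy
`(1-v₁)(1 - F_{θ₁}(y-1)) + v₁(1 - F_{θ₁}(y)) = c` and
`(1-v₂)(1 - F_{θ₂}(y-1)) + v₂(1 - F_{θ₂}(y)) = c`, then `θ₁ < θ₂`
(the randomized lower endpoint `ℓ_R(y,v)` is strictly increasing in `v`). -/
theorem stmt_11 (n : ℕ) (hn : 1 ≤ n) (y : ℕ) (hy : y ≤ n)
    (v₁ v₂ : ℝ) (hv₁ : 0 ≤ v₁) (hv₁₂ : v₁ < v₂) (hv₂ : v₂ ≤ 1)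
    (c : ℝ) (hc : c ∈ Set.Ioo (0 : ℝ) 1)
    (θ₁ θ₂ : ℝ) (hθ₁ : θ₁ ∈ Set.Ioo (0 : ℝ) 1) (hθ₂ : θ₂ ∈ Set.Ioo (0 : ℝ) 1)
    (h1 : (1 - v₁) * (1 - binomCDFpred n θ₁ y) + v₁ * (1 - binomCDF n θ₁ y) = c)
    (h2 : (1 - v₂) * (1 - binomCDFpred n θ₂ y) + v₂ * (1 - binomCDF n θ₂ y) = c) :
    θ₁ < θ₂ := by
  obtain ⟨hθ₁0, hθ₁1⟩ := hθ₁
  obtain ⟨hθ₂0, hθ₂1⟩ := hθ₂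
  set H : ℝ → ℝ :=
    fun x => (1 - v₂) * (1 - binomCDFpred n x y) + v₂ * (1 - binomCDF n x y) with hHdef
  have hCDFeq : ∀ x : ℝ, binomCDF n x y = binomCDFpred n x (y+1) := fun x => rfl
  have hH : ∀ x : ℝ, HasDerivAt H
      ((1 - v₂) * binomG n y x + v₂ * binomG n (y+1) x) x := by
    intro x
    have hp := hasDerivAt_binomCDFpred n hn y hy x
    have hq : HasDerivAt (fun t => binomCDF n t y) (-(binomG n (y+1) x)) x := by
      have h : HasDerivAt (fun t => ∑ j ∈ Finset.range (y+1), binomP n t j)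
          (∑ j ∈ Finset.range (y+1), (binomG n j x - binomG n (j+1) x)) x :=
        HasDerivAt.fun_sum fun j hj =>
          hasDerivAt_binomP_s11 n hn j (by
            have := Finset.mem_range.mp hj; omega) x
      rw [Finset.sum_range_sub'] at h
      simpa [binomCDF, binomG] using h
    have := (((hp.const_sub 1).const_mul (1 - v₂)).add ((hq.const_sub 1).const_mul v₂))
    rw [show (1 - v₂) * binomG n y x + v₂ * binomG n (y+1) x = (1 - v₂) * - -binomG n y x + v₂ * - -binomG n (y + 1) x by ring]
    exact this
  have hv₂0 : 0 ≤ v₂ := le_of_lt (lt_of_le_of_lt hv₁ hv₁₂)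
  have hv₂1 : 0 ≤ 1 - v₂ := by linarith
  have hmono : MonotoneOn H (Set.Icc (0:ℝ) 1) := by
    apply monotoneOn_of_deriv_nonneg (convex_Icc (0:ℝ) 1)
    · exact fun x _ => ((hH x).differentiableAt).continuousAt.continuousWithinAt
    · intro x hx
      exact ((hH x).differentiableAt).differentiableWithinAt
    · intro x hx
      rw [interior_Icc] at hx
      rw [(hH x).deriv]
      have g1 := binomG_nonneg n y (le_of_lt hx.1) (le_of_lt hx.2)
      have g2 := binomG_nonneg n (y+1) (le_of_lt hx.1) (le_of_lt hx.2)
      positivity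
  have hdiff : binomCDF n θ₁ y - binomCDFpred n θ₁ y = binomP n θ₁ y := by
    simp [binomCDF, binomCDFpred, Finset.sum_range_succ]
  have hfpos : 0 < binomP n θ₁ y := by
    have hcpos : 0 < (n.choose y : ℝ) := by
      exact_mod_cast Nat.choose_pos hy
    have h1t : (0:ℝ) < 1 - θ₁ := by linarith
    unfold binomP
    positivity
  have hHθ₁ : H θ₁ = c - (v₂ - v₁) * binomP n θ₁ y := by
    rw [hHdef]
    simp only
    linear_combination h1 - (v₂ - v₁) * hdiff
  have hHθ₂ : H θ₂ = c := h2
  by_contra hcon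
  push_neg at hcon
  have hle : H θ₂ ≤ H θ₁ :=
    hmono (Set.mem_Icc.mpr ⟨le_of_lt hθ₂0, le_of_lt hθ₂1⟩)
      (Set.mem_Icc.mpr ⟨le_of_lt hθ₁0, le_of_lt hθ₁1⟩) hcon
  rw [hHθ₁, hHθ₂] at hle
  nlinarith [hfpos, hv₁₂]
end
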